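/- Let U be a countable homogeneous structure such that Aut(U) has a trivial center, let ι be a monoid endomorphism of the self-embedding monoid Emb(U) that fixes every automorphism of U, and let h ∈ Emb(U) be such that the image of h is superhomogeneous in U. Then ι(h) = h. -/

import Mathlib

open FirstOrder Language Set Cardinal Topology

universe u v w

namespace Paper

/-- The topology of pointwise convergence on `X → X` (product topology, `X` discrete). -/
def ptTop (X : Type*) : TopologicalSpace (X → X) :=
  ⨅ x : X, TopologicalSpace.induced (fun f => f x) ⊥

/-- The topology of pointwise convergence on the symmetric group on `X`
(subspace topology inherited from `X → X`). -/
def symTop (X : Type*) : TopologicalSpace (Equiv.Perm X) :=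
  TopologicalSpace.induced (fun g : Equiv.Perm X => ⇑g) (ptTop X)

/-- The subspace topology (of the topology of pointwise convergence) on a
permutation group on `X`. -/
def subgroupTop {X : Type*} (H : Subgroup (Equiv.Perm X)) : TopologicalSpace H :=
  TopologicalSpace.induced (fun h : H => (⇑(h : Equiv.Perm X) : X → X)) (ptTop X)

/-- The subspace topology (of the topology of pointwise convergence) on a
transformation monoid on `X`. -/
def submonoidTop {X : Type*} (N : Submonoid (Function.End X)) : TopologicalSpace N :=
  TopologicalSpace.induced (fun n : N => ((n : Function.End X) : X → X)) (ptTop X)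

variable (L : FirstOrder.Language.{u, v}) (M : Type w) [L.Structure M]

/-- The monoid of self-embeddings of a structure, as a submonoid of `Function.End M`. -/
def embM : Submonoid (Function.End M) where
  carrier := {f | ∃ e : M ↪[L] M, ⇑e = f}
  one_mem' := ⟨Embedding.refl L M, rfl⟩
  mul_mem' := by
    rintro f g ⟨e₁, rfl⟩ ⟨e₂, rfl⟩
    exact ⟨e₁.comp e₂, rfl⟩

/-- The monoid of elementary self-embeddings of a structure, as a submonoid of
`Function.End M`. -/
def eembM : Submonoid (Function.End M) where
  carrier := {f | ∃ e : M ↪ₑ[L] M, ⇑e = f}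
  one_mem' := ⟨ElementaryEmbedding.refl L M, rfl⟩
  mul_mem' := by
    rintro f g ⟨e₁, rfl⟩ ⟨e₂, rfl⟩
    exact ⟨e₁.comp e₂, rfl⟩

/-- The automorphism group of a structure, as a subgroup of `Equiv.Perm M`. -/
def autG : Subgroup (Equiv.Perm M) where
  carrier := {g | ∃ e : M ≃[L] M, ⇑e = ⇑g}
  one_mem' := ⟨Language.Equiv.refl L M, rfl⟩
  mul_mem' := by
    rintro g h ⟨e₁, he₁⟩ ⟨e₂, he₂⟩
    exact ⟨e₁.comp e₂, funext fun x => by simp [he₁, he₂]⟩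
  inv_mem' := by
    rintro g ⟨e, he⟩
    refine ⟨e.symm, funext fun x => e.injective ?_⟩
    rw [Language.Equiv.apply_symm_apply, he]
    simp



variable (L : FirstOrder.Language.{u, v}) (M : Type w) [L.Structure M]

/-- `M` is `κ`-saturated: for every tuple `ā` over `M` of length `< κ`, every elementary
extension `N` of `M` and every `b ∈ N` there is `c ∈ M` with `(N, āb) ≡ (M, āc)`. -/
def IsSaturatedAt (κ : Cardinal.{w}) : Prop :=
  ∀ (α : Type w), #α < κ →
    ∀ (N : Type w) (_ : L.Structure N) (e : M ↪ₑ[L] N) (a : α → M) (b : N),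
      ∃ c : M, ∀ φ : L.Formula (α ⊕ Unit),
        φ.Realize (Sum.elim (⇑e ∘ a) fun _ => b) ↔ φ.Realize (Sum.elim a fun _ => c)

/-- `M` is saturated if it is `|M|`-saturated. -/
def IsSaturated : Prop := IsSaturatedAt L M #M

/-- A substructure `V` of `M` is superhomogeneous in `M` if (1) every local isomorphism of `V`
(an isomorphism between finitely generated substructures of `V`) extends to an automorphism
of `M` whose restriction to `V` is an automorphism of `V`, and (2) for every `y ∉ V` there is
an automorphism of `M` fixing `V` pointwise that moves `y`. -/
def IsSuperhomogeneous (V : L.Substructure M) : Prop :=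
  (∀ (S : L.Substructure M), S ≤ V → S.FG → ∀ f : S ↪[L] M, (∀ s : S, f s ∈ V) →
      ∃ g : M ≃[L] M, (∀ s : S, g s = f s) ∧ ⇑g '' (V : Set M) = (V : Set M)) ∧
  (∀ y : M, y ∉ V → ∃ g : M ≃[L] M, (∀ v ∈ V, g v = v) ∧ g y ≠ y)

/-- The theory of `M` has quantifier elimination: every formula is equivalent, modulo the
theory of `M`, to a quantifier-free formula. -/
def HasQE : Prop :=
  ∀ (n : ℕ) (φ : L.Formula (Fin n)), ∃ ψ : L.Formula (Fin n),
    ψ.IsQF ∧ (φ ⇔[L.completeTheory M] ψ)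

/-- A countable saturated structure is smooth if its signature is countable and its theory
has quantifier elimination. -/
def Smooth : Prop :=
  L.card ≤ ℵ₀ ∧ Countable M ∧ IsSaturated L M ∧ HasQE L M

/-- The center of the automorphism group of `M` is trivial. -/
def TrivialAutCenter : Prop :=
  ∀ e : M ≃[L] M, (∀ g : M ≃[L] M, ∀ x : M, e (g x) = g (e x)) → ∀ x : M, e x = x

/-- The language with a single relation symbol of arity `n`. -/
def oneRel (n : ℕ) : FirstOrder.Language :=
  ⟨fun _ => Empty, fun m => PLift (m = n)⟩

/-- The structure on `M` over `oneRel n` given by interpreting the relation symbol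
as `R ⊆ Mⁿ`. -/
def oneRelStructure {n : ℕ} {M : Type w} (R : Set (Fin n → M)) : (oneRel n).Structure M where
  funMap := fun f _ => f.elim
  RelMap := fun {m} r v => R (fun i => v (Fin.cast r.down.symm i))

/-- A structure `M` is splendid if for every extension of the language by a single relation
symbol `ρ` and every structure `N` for the extended language whose reduct is elementarily
equivalent to `M`, the symbol `ρ` can be interpreted in `M` in such a way that the resulting
expansion is elementarily equivalent to `N`. -/
def Splendid : Prop :=
  ∀ (n : ℕ) (N : Type w) (SN : L.Structure N) (RN : Set (Fin n → N)),
    (letI := SN; M ≅[L] N) →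
    ∃ RM : Set (Fin n → M),
      letI := SN
      letI : (oneRel n).Structure N := oneRelStructure RN
      letI : (oneRel n).Structure M := oneRelStructure RM
      M ≅[L.sum (oneRel n)] N

/-- A structure `M` is `κ`-big if all of its expansions by constants `(M, ā)`, for tuples `ā`
of length `< κ`, are splendid. -/
def IsBig (κ : Cardinal.{w}) : Prop :=
  ∀ (α : Type w), #α < κ → ∀ a : α → M,
    letI : (constantsOn α).Structure M := constantsOn.structure a
    Splendid (L[[α]]) M


open FirstOrder.Language.Structure

/-- A bijective self-embedding of an `L`-structure is an automorphism. -/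
noncomputable def equivOfSurjective {L : FirstOrder.Language.{u, v}} {M : Type w} [L.Structure M]
    (f : M ↪[L] M) (hf : Function.Surjective f) : M ≃[L] M where
  toEquiv := Equiv.ofBijective f ⟨f.injective, hf⟩
  map_fun' := f.map_fun'
  map_rel' := f.map_rel'

/-- Let `U` be a countable homogeneous structure whose automorphism group has
a trivial center, let `ι` be a monoid endomorphism of `Emb(U)` fixing every automorphism, and
let `h` be a self-embedding whose image is superhomogeneous in `U`. Then `ι h = h`. -/
theorem statement_4 (L : FirstOrder.Language.{u, v}) (U : Type w) [L.Structure U] [Countable U]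
    (hhom : L.IsUltrahomogeneous U) (hcenter : TrivialAutCenter L U)
    (ι : embM L U →* embM L U)
    (hfix : ∀ f : embM L U, (∃ e : U ≃[L] U, (⇑e : U → U) = (f : Function.End U)) → ι f = f)
    (h : embM L U)
    (hsup : IsSuperhomogeneous L U
      (Substructure.closure L (Set.range ((h : Function.End U) : U → U)))) :
    ι h = h := by
  classical
  obtain ⟨H, hH⟩ := h.2
  obtain ⟨K, hK⟩ := (ι h).2
  set V : L.Substructure U :=
    Substructure.closure L (Set.range ((h : Function.End U) : U → U)) with hVdef
  -- membership in `V`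
  have hVmem : ∀ x : U, x ∈ V ↔ ∃ z, H z = x := by
    intro x
    constructor
    · intro hx
      have hle : V ≤ H.toHom.range := by
        rw [hVdef]
        apply Substructure.closure_le.2
        rintro y ⟨z, rfl⟩
        exact ⟨z, by simp [hH]⟩
      obtain ⟨z, hz⟩ := hle hx
      exact ⟨z, by simpa using hz⟩
    · rintro ⟨z, rfl⟩
      rw [hVdef]
      exact Substructure.subset_closure ⟨z, by simp [← hH]⟩
  -- Step A : the range of `ι h` is contained in `V`
  have hKV : ∀ x : U, K x ∈ V := by
    intro x
    by_contra hx
    obtain ⟨g, hgV, hgx⟩ := hsup.2 (K x) hx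
    have hg' : (⇑g : Function.End U) ∈ embM L U := ⟨g.toEmbedding, g.coe_toEmbedding⟩
    set g' : embM L U := ⟨⇑g, hg'⟩ with hg'def
    have h1 : g' * h = h := by
      apply Subtype.ext
      funext z
      show g ((h : Function.End U) z) = (h : Function.End U) z
      exact hgV _ ((hVmem _).2 ⟨z, congrFun hH z⟩)
    have h2 : ι g' = g' := hfix g' ⟨g, rfl⟩
    have h3 : g' * ι h = ι h := by rw [← h2, ← map_mul, h1]
    apply hgx
    have h4 := congrFun (congrArg (fun f : embM L U => (f : Function.End U)) h3) x
    have h5 : g ((ι h : Function.End U) x) = (ι h : Function.End U) x := h4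
    rwa [← hK] at h5
  -- Step B : define `e` with `H ∘ e = K`
  have heDef : ∀ x : U, ∃ z, H z = K x := fun x => (hVmem (K x)).1 (hKV x)
  choose e he using heDef
  have heinj : Function.Injective e := by
    intro a b hab
    apply K.injective
    rw [← he, ← he, hab]
  have hemapfun : ∀ {n} (F : L.Functions n) (v : Fin n → U),
      e (funMap F v) = funMap F (e ∘ v) := by
    intro n F v
    apply H.injective
    rw [he, H.map_fun, K.map_fun]
    congr 1
    funext i
    exact (he (v i)).symm
  have hemaprel : ∀ {n} (r : L.Relations n) (v : Fin n → U),
      RelMap r (e ∘ v) ↔ RelMap r v := by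
    intro n r v
    have h1 : (⇑H ∘ (e ∘ v)) = (⇑K ∘ v) := by
      funext i
      exact he (v i)
    calc RelMap r (e ∘ v) ↔ RelMap r (⇑H ∘ (e ∘ v)) := (H.map_rel' r (e ∘ v)).symm
      _ ↔ RelMap r (⇑K ∘ v) := by rw [h1]
      _ ↔ RelMap r v := K.map_rel' r v
  set E : U ↪[L] U :=
    ⟨⟨e, heinj⟩, fun {n} F v => hemapfun F v, fun {n} r v => hemaprel r v⟩ with hEdef
  have hEcoe : ⇑E = e := rfl
  -- Step C–F : `e` commutes with every automorphism of `U`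
  have hcomm : ∀ (g : U ≃[L] U) (x : U), e (g x) = g (e x) := by
    intro g x
    set S : L.Substructure U := Substructure.closure L {H x, H (e x)} with hSdef
    have hxS : H x ∈ S := Substructure.subset_closure (Set.mem_insert _ _)
    have hexS : H (e x) ∈ S :=
      Substructure.subset_closure (Set.mem_insert_of_mem _ (Set.mem_singleton _))
    have hSV : S ≤ V := by
      rw [hSdef]
      apply Substructure.closure_le.2
      rintro y (rfl | rfl)
      · exact (hVmem _).2 ⟨x, rfl⟩
      · exact (hVmem _).2 ⟨e x, rfl⟩
    have hSfg : S.FG :=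
      Substructure.fg_closure ((Set.finite_singleton _).insert _)
    have hSR : S ≤ H.toHom.range := fun y hy => by
      obtain ⟨z, hz⟩ := (hVmem y).1 (hSV hy)
      exact ⟨z, by simpa using hz⟩
    set f : S ↪[L] U :=
      (H.comp (g.toEmbedding.comp H.equivRange.symm.toEmbedding)).comp
        (Substructure.inclusion hSR) with hfdef
    have hsymm : ∀ (z : U) (hz : H z ∈ H.toHom.range),
        H.equivRange.symm ⟨H z, hz⟩ = z := by
      intro z hz
      have h1 : H.equivRange z = ⟨H z, hz⟩ := Subtype.ext (H.equivRange_apply z)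
      rw [← h1, Language.Equiv.symm_apply_apply]
    have hfeval : ∀ (z : U) (hz : H z ∈ S), f ⟨H z, hz⟩ = H (g z) := by
      intro z hz
      show H (g (H.equivRange.symm (Substructure.inclusion hSR ⟨H z, hz⟩))) = H (g z)
      have h2 : Substructure.inclusion hSR ⟨H z, hz⟩ = ⟨H z, hSR hz⟩ := rfl
      rw [h2, hsymm z (hSR hz)]
    have hfV : ∀ s : S, f s ∈ V := by
      intro s
      obtain ⟨z, hz'⟩ := hSR s.2
      have hz'' : H z = ↑s := by simpa using hz'
      have hz : H z ∈ S := by rw [hz'']; exact s.2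
      have hs2 : s = ⟨H z, hz⟩ := Subtype.ext hz''.symm
      rw [hs2, hfeval z hz]
      exact (hVmem _).2 ⟨g z, rfl⟩
    obtain ⟨γ, hγf, hγV⟩ := hsup.1 S hSV hSfg f hfV
    have c1 : γ (H x) = H (g x) := by
      have := hγf ⟨H x, hxS⟩
      rwa [hfeval x hxS] at this
    have c2 : γ (H (e x)) = H (g (e x)) := by
      have := hγf ⟨H (e x), hexS⟩
      rwa [hfeval (e x) hexS] at this
    -- define β with H ∘ β = γ ∘ H
    have hβDef : ∀ z : U, ∃ w, H w = γ (H z) := by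
      intro z
      have h1 : γ (H z) ∈ ⇑γ '' (V : Set U) := ⟨H z, (hVmem _).2 ⟨z, rfl⟩, rfl⟩
      rw [hγV] at h1
      exact (hVmem _).1 h1
    choose β hβ using hβDef
    have hβinj : Function.Injective β := by
      intro a b hab
      apply H.injective
      apply γ.injective
      rw [← hβ, ← hβ, hab]
    have hβsurj : Function.Surjective β := by
      intro w
      have h1 : H w ∈ (V : Set U) := (hVmem _).2 ⟨w, rfl⟩
      rw [← hγV] at h1
      obtain ⟨v, hv, hvw⟩ := h1
      obtain ⟨z, rfl⟩ := (hVmem v).1 hv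
      refine ⟨z, H.injective ?_⟩
      rw [hβ, hvw]
    have hβmapfun : ∀ {n} (F : L.Functions n) (v : Fin n → U),
        β (funMap F v) = funMap F (β ∘ v) := by
      intro n F v
      apply H.injective
      rw [hβ, H.map_fun, H.map_fun, γ.map_fun]
      congr 1
      funext i
      exact (hβ (v i)).symm
    have hβmaprel : ∀ {n} (r : L.Relations n) (v : Fin n → U),
        RelMap r (β ∘ v) ↔ RelMap r v := by
      intro n r v
      have h1 : (⇑H ∘ (β ∘ v)) = (⇑γ ∘ (⇑H ∘ v)) := by
        funext i
        exact hβ (v i)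
      calc RelMap r (β ∘ v) ↔ RelMap r (⇑H ∘ (β ∘ v)) := (H.map_rel' r (β ∘ v)).symm
        _ ↔ RelMap r (⇑γ ∘ (⇑H ∘ v)) := by rw [h1]
        _ ↔ RelMap r (⇑H ∘ v) := γ.map_rel' r (⇑H ∘ v)
        _ ↔ RelMap r v := H.map_rel' r v
    set B : U ≃[L] U :=
      ⟨Equiv.ofBijective β ⟨hβinj, hβsurj⟩, fun {n} F v => hβmapfun F v,
        fun {n} r v => hβmaprel r v⟩ with hBdef
    have hBcoe : ⇑B = β := rfl
    -- the monoid relation  γ * h = h * β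
    have hγ' : (⇑γ : Function.End U) ∈ embM L U := ⟨γ.toEmbedding, γ.coe_toEmbedding⟩
    set γ' : embM L U := ⟨⇑γ, hγ'⟩ with hγ'def
    have hB' : (⇑B : Function.End U) ∈ embM L U := ⟨B.toEmbedding, B.coe_toEmbedding⟩
    set B' : embM L U := ⟨⇑B, hB'⟩ with hB'def
    have hrel : γ' * h = h * B' := by
      apply Subtype.ext
      funext z
      show γ ((h : Function.End U) z) = (h : Function.End U) (B z)
      have h1 : (h : Function.End U) z = H z := (congrFun hH z).symm
      have h2 : (h : Function.End U) (B z) = H (B z) := (congrFun hH (B z)).symm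
      rw [h1, h2, hBcoe, hβ]
    have hrel2 : γ' * ι h = ι h * B' := by
      rw [← hfix γ' ⟨γ, rfl⟩, ← hfix B' ⟨B, rfl⟩, ← map_mul, ← map_mul, hrel]
    have h4 := congrFun (congrArg (fun f : embM L U => (f : Function.End U)) hrel2) x
    have h5 : γ ((ι h : Function.End U) x) = (ι h : Function.End U) (β x) := h4
    rw [← hK] at h5
    -- β x = g x
    have h6 : β x = g x := by
      apply H.injective
      rw [hβ, c1]
    rw [h6] at h5
    -- conclude
    apply H.injective
    rw [he, ← h5, ← he, c2]
  -- Step G : `e` is surjective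
  have hesurj : Function.Surjective e := by
    intro y
    obtain ⟨δ, hδ⟩ := hhom (Substructure.closure L {y}) (Substructure.fg_closure_singleton y)
      (E.comp (Substructure.subtype _))
    have hyc : y ∈ Substructure.closure L ({y} : Set U) :=
      Substructure.subset_closure (Set.mem_singleton _)
    have h1 : e y = δ y := by
      have := congrFun (congrArg (fun f : _ ↪[L] U => ⇑f) hδ) ⟨y, hyc⟩
      simp at this
      exact this
    refine ⟨δ.symm y, ?_⟩
    have h2 : e (δ.symm y) = δ.symm (e y) := hcomm δ.symm y
    rw [h2, h1, Language.Equiv.symm_apply_apply]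
  -- Step H : `e` is the identity
  have heid : ∀ x : U, e x = x := by
    have := hcenter (equivOfSurjective E hesurj) (fun g x => hcomm g x)
    exact this
  -- conclusion
  apply Subtype.ext
  funext x
  show (ι h : Function.End U) x = (h : Function.End U) x
  rw [← hK, ← hH, ← he, heid]

end Paper
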